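/- Under consistency (A = a implies Y^a = Y), no unobserved confounders for the control potential outcome (Y^0 independent of A given X), monotonicity (Y^1 ≥ Y^0), and positivity, the probability of causation PC(x) = P(Y^0 = 0 | Y = 1, A = 1, X = x) equals 1 - E[Y | A = 0, X = x] / E[Y | A = 1, X = x]. -/

import Mathlib

open MeasureTheory ProbabilityTheory
open scoped ENNReal

lemma key_lemma {Ω : Type*} [MeasurableSpace Ω]
    (ν : Measure Ω) [IsProbabilityMeasure ν]
    (A Y Y0 Y1 : Ω → ℝ)
    (hA : Measurable A) (hY : Measurable Y) (hY0m : Measurable Y0)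
    (hYbin : ∀ ω, Y ω = 0 ∨ Y ω = 1)
    (hY0bin : ∀ ω, Y0 ω = 0 ∨ Y0 ω = 1)
    (hY1bin : ∀ ω, Y1 ω = 0 ∨ Y1 ω = 1)
    (hcons0 : ∀ ω, A ω = 0 → Y ω = Y0 ω)
    (hcons1 : ∀ ω, A ω = 1 → Y ω = Y1 ω)
    (hmono : ∀ᵐ ω ∂ν, Y0 ω ≤ Y1 ω)
    (hposA0 : ν {ω | A ω = 0} ≠ 0)
    (hposA1 : ν {ω | A ω = 1} ≠ 0)
    (hposYA : ν {ω | Y ω = 1 ∧ A ω = 1} ≠ 0)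
    (hnuc : ∀ s t : ℝ,
      ν ({ω | Y0 ω = s} ∩ {ω | A ω = t})
        = ν {ω | Y0 ω = s} * ν {ω | A ω = t}) :
    (ν[|{ω | Y ω = 1 ∧ A ω = 1}] {ω | Y0 ω = 0}).toReal
      = 1 - (ν[|{ω | A ω = 0}] {ω | Y ω = 1}).toReal
            / (ν[|{ω | A ω = 1}] {ω | Y ω = 1}).toReal := by
  -- measurable sets
  have mA1 : MeasurableSet {ω | A ω = 1} := hA (measurableSet_singleton 1)
  have mA0 : MeasurableSet {ω | A ω = 0} := hA (measurableSet_singleton 0)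
  have mY1 : MeasurableSet {ω | Y ω = 1} := hY (measurableSet_singleton 1)
  have mQ0 : MeasurableSet {ω | Y0 ω = 0} := hY0m (measurableSet_singleton 0)
  have mQ1 : MeasurableSet {ω | Y0 ω = 1} := hY0m (measurableSet_singleton 1)
  have mS : MeasurableSet {ω | Y ω = 1 ∧ A ω = 1} := by
    have : {ω | Y ω = 1 ∧ A ω = 1} = {ω | Y ω = 1} ∩ {ω | A ω = 1} := rfl
    rw [this]; exact mY1.inter mA1
  -- expand conditionals
  rw [cond_apply mS, cond_apply mA0, cond_apply mA1]
  -- key ENNReal facts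
  -- F1 : q0 + q1 = 1
  have F1 : ν {ω | Y0 ω = 0} + ν {ω | Y0 ω = 1} = 1 := by
    rw [← measure_union _ mQ1]
    · have : {ω | Y0 ω = 0} ∪ {ω | Y0 ω = 1} = Set.univ := by
        ext ω; simpa using hY0bin ω
      rw [this, measure_univ]
    · rw [Set.disjoint_left]
      rintro ω (h0 : Y0 ω = 0) (h1 : Y0 ω = 1)
      rw [h0] at h1; norm_num at h1
  -- F2 : ν (A=0 ∩ Y=1) = q1 * pA0
  have F2 : ν ({ω | A ω = 0} ∩ {ω | Y ω = 1})
      = ν {ω | Y0 ω = 1} * ν {ω | A ω = 0} := by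
    rw [← hnuc 1 0]
    congr 1
    ext ω
    simp only [Set.mem_inter_iff, Set.mem_setOf_eq]
    constructor
    · rintro ⟨ha, hy⟩; exact ⟨by rw [← hcons0 ω ha]; exact hy, ha⟩
    · rintro ⟨hy0, ha⟩; exact ⟨ha, by rw [hcons0 ω ha]; exact hy0⟩
  -- F3 : ν (A=1 ∩ Y0=0) = q0 * b
  have F3 : ν ({ω | A ω = 1} ∩ {ω | Y0 ω = 0})
      = ν {ω | Y0 ω = 0} * ν {ω | A ω = 1} := by
    rw [← hnuc 0 1]; congr 1; ext ω
    simp only [Set.mem_inter_iff, Set.mem_setOf_eq]; tauto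
  -- F4 : a.e. equality of (A=1 ∩ Y0=0) \ Y=1 and (A=1) \ Y=1
  have F4 : ν (({ω | A ω = 1} ∩ {ω | Y0 ω = 0}) \ {ω | Y ω = 1})
      = ν ({ω | A ω = 1} \ {ω | Y ω = 1}) := by
    apply measure_congr
    rw [Filter.eventuallyEq_set]
    filter_upwards [hmono] with ω hω
    simp only [Set.mem_diff, Set.mem_inter_iff, Set.mem_setOf_eq]
    constructor
    · rintro ⟨⟨ha, _⟩, hy⟩; exact ⟨ha, hy⟩
    · rintro ⟨ha, hy⟩
      refine ⟨⟨ha, ?_⟩, hy⟩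
      have hy0 : Y ω = 0 := (hYbin ω).resolve_right hy
      have h1 : Y1 ω = 0 := by rw [← hcons1 ω ha]; exact hy0
      rcases hY0bin ω with h | h
      · exact h
      · exfalso; rw [h, h1] at hω; norm_num at hω
  -- F5, F6 : decompositions
  have F5 : ν (({ω | A ω = 1} ∩ {ω | Y0 ω = 0}) ∩ {ω | Y ω = 1})
      + ν (({ω | A ω = 1} ∩ {ω | Y0 ω = 0}) \ {ω | Y ω = 1})
      = ν ({ω | A ω = 1} ∩ {ω | Y0 ω = 0}) := measure_inter_add_diff _ mY1
  have F6 : ν ({ω | A ω = 1} ∩ {ω | Y ω = 1})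
      + ν ({ω | A ω = 1} \ {ω | Y ω = 1})
      = ν {ω | A ω = 1} := measure_inter_add_diff _ mY1
  -- name the sets
  have hSeq : {ω | Y ω = 1 ∧ A ω = 1} ∩ {ω | Y0 ω = 0}
      = ({ω | A ω = 1} ∩ {ω | Y0 ω = 0}) ∩ {ω | Y ω = 1} := by
    ext ω; simp only [Set.mem_inter_iff, Set.mem_setOf_eq]; tauto
  have hSeq2 : {ω | Y ω = 1 ∧ A ω = 1} = {ω | A ω = 1} ∩ {ω | Y ω = 1} := by
    ext ω; simp only [Set.mem_inter_iff, Set.mem_setOf_eq]; tauto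
  rw [hSeq, hSeq2]
  -- move to real numbers
  set b := ν {ω | A ω = 1} with hb
  set pA0 := ν {ω | A ω = 0} with hpA0
  set q0 := ν {ω | Y0 ω = 0} with hq0
  set q1 := ν {ω | Y0 ω = 1} with hq1
  set c := ν ({ω | A ω = 1} ∩ {ω | Y ω = 1}) with hc
  set n := ν (({ω | A ω = 1} ∩ {ω | Y0 ω = 0}) ∩ {ω | Y ω = 1}) with hn
  set d := ν ({ω | A ω = 1} \ {ω | Y ω = 1}) with hd
  set m := ν ({ω | A ω = 0} ∩ {ω | Y ω = 1}) with hm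
  have hcne : c ≠ 0 := by
    rw [hc]; rw [hSeq2] at hposYA; exact hposYA
  have fin : ∀ s : Set Ω, ν s ≠ ∞ := fun s => measure_ne_top ν s
  -- real versions
  have rF1 : q0.toReal + q1.toReal = 1 := by
    rw [← ENNReal.toReal_add (fin _) (fin _), F1]; simp
  have rF2 : m.toReal = q1.toReal * pA0.toReal := by
    rw [F2, ENNReal.toReal_mul]
  have rF5 : n.toReal + d.toReal = q0.toReal * b.toReal := by
    rw [F4, F3] at F5
    rw [← ENNReal.toReal_add (fin _) (fin _), F5, ENNReal.toReal_mul]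
  have rF6 : c.toReal + d.toReal = b.toReal := by
    rw [← ENNReal.toReal_add (fin _) (fin _), F6]
  have hbR : b.toReal ≠ 0 := by
    simp [ENNReal.toReal_ne_zero, hposA1, fin]; exact fin _
  have hpA0R : pA0.toReal ≠ 0 := by
    simp [ENNReal.toReal_ne_zero, hposA0, fin]; exact fin _
  have hcR : c.toReal ≠ 0 := by
    simp [ENNReal.toReal_ne_zero, hcne, fin]; exact fin _
  rw [ENNReal.toReal_mul, ENNReal.toReal_mul, ENNReal.toReal_mul,
    ENNReal.toReal_inv, ENNReal.toReal_inv, ENNReal.toReal_inv]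
  field_simp
  linear_combination (pA0.toReal*rF5 - pA0.toReal*rF6 + b.toReal*rF2 + (pA0.toReal*b.toReal)*rF1)


/-- Under positivity, consistency, no unobserved confounders for `Y⁰`, and monotonicity,
the probability of causation `PC(x) = P(Y⁰ = 0 ∣ Y = 1, A = 1, X = x)` equals
`1 - E[Y ∣ A = 0, X = x] / E[Y ∣ A = 1, X = x]`. -/
theorem stmt_0
    {Ω 𝒳 : Type*} [MeasurableSpace Ω] [MeasurableSpace 𝒳]
    (μ : Measure Ω) [IsProbabilityMeasure μ]
    (X : Ω → 𝒳) (A Y Y0 Y1 : Ω → ℝ) (x : 𝒳)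
    (hX : Measurable X) (hA : Measurable A) (hY : Measurable Y)
    (hY0m : Measurable Y0) (hY1m : Measurable Y1)
    (hxMeas : MeasurableSet {ω | X ω = x})
    -- binary variables
    (hAbin : ∀ ω, A ω = 0 ∨ A ω = 1)
    (hYbin : ∀ ω, Y ω = 0 ∨ Y ω = 1)
    (hY0bin : ∀ ω, Y0 ω = 0 ∨ Y0 ω = 1)
    (hY1bin : ∀ ω, Y1 ω = 0 ∨ Y1 ω = 1)
    -- consistency: A = a implies Y = Yᵃ
    (hcons0 : ∀ ω, A ω = 0 → Y ω = Y0 ω)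
    (hcons1 : ∀ ω, A ω = 1 → Y ω = Y1 ω)
    -- monotonicity: Y¹ ≥ Y⁰ almost surely
    (hmono : ∀ᵐ ω ∂μ, Y0 ω ≤ Y1 ω)
    -- positivity
    (hposX : μ {ω | X ω = x} ≠ 0)
    (hposA0 : μ[|{ω | X ω = x}] {ω | A ω = 0} ≠ 0)
    (hposA1 : μ[|{ω | X ω = x}] {ω | A ω = 1} ≠ 0)
    (hposYA : μ[|{ω | X ω = x}] {ω | Y ω = 1 ∧ A ω = 1} ≠ 0)
    -- no unobserved confounders: Y⁰ ⟂ A ∣ X = x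
    (hnuc : ∀ s t : ℝ,
      μ[|{ω | X ω = x}] ({ω | Y0 ω = s} ∩ {ω | A ω = t})
        = μ[|{ω | X ω = x}] {ω | Y0 ω = s} * μ[|{ω | X ω = x}] {ω | A ω = t}) :
    (μ[|{ω | Y ω = 1 ∧ A ω = 1 ∧ X ω = x}] {ω | Y0 ω = 0}).toReal
      = 1 - (μ[|{ω | A ω = 0 ∧ X ω = x}] {ω | Y ω = 1}).toReal
            / (μ[|{ω | A ω = 1 ∧ X ω = x}] {ω | Y ω = 1}).toReal := by
    
  have mS : MeasurableSet {ω | Y ω = 1 ∧ A ω = 1} := by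
    have : {ω | Y ω = 1 ∧ A ω = 1} = {ω | Y ω = 1} ∩ {ω | A ω = 1} := rfl
    rw [this]; exact (hY (measurableSet_singleton 1)).inter (hA (measurableSet_singleton 1))
  have mA0 : MeasurableSet {ω | A ω = 0} := hA (measurableSet_singleton 0)
  have mA1 : MeasurableSet {ω | A ω = 1} := hA (measurableSet_singleton 1)
  have hS1 : {ω | Y ω = 1 ∧ A ω = 1 ∧ X ω = x}
      = {ω | X ω = x} ∩ {ω | Y ω = 1 ∧ A ω = 1} := by
    ext ω; simp only [Set.mem_inter_iff, Set.mem_setOf_eq]; tauto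
  have hS2 : {ω | A ω = 0 ∧ X ω = x} = {ω | X ω = x} ∩ {ω | A ω = 0} := by
    ext ω; simp only [Set.mem_inter_iff, Set.mem_setOf_eq]; tauto
  have hS3 : {ω | A ω = 1 ∧ X ω = x} = {ω | X ω = x} ∩ {ω | A ω = 1} := by
    ext ω; simp only [Set.mem_inter_iff, Set.mem_setOf_eq]; tauto
  rw [hS1, hS2, hS3, ← cond_cond_eq_cond_inter hxMeas mS μ,
    ← cond_cond_eq_cond_inter hxMeas mA0 μ, ← cond_cond_eq_cond_inter hxMeas mA1 μ]
  haveI : IsProbabilityMeasure (μ[|{ω | X ω = x}]) := cond_isProbabilityMeasure hposX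
  exact key_lemma (μ[|{ω | X ω = x}]) A Y Y0 Y1 hA hY hY0m hYbin hY0bin hY1bin
    hcons0 hcons1 (hmono.filter_mono cond_absolutelyContinuous.ae_le)
    hposA0 hposA1 hposYA hnuc
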